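/- Let G be a finite group with a normal p-subgroup P, and let C be a Thompson critical subgroup of P. If p is odd then Ω₁(C) has exponent p, and if P is a nonabelian 2-group then Ω₂(C) has exponent 4. -/

import Mathlib

/-- `Ω_k(C)`: the subgroup generated by the elements of `C` of order dividing `p^k`. -/
def omegaK (p k : ℕ) {P : Type*} [Group P] (C : Subgroup P) : Subgroup P :=
  Subgroup.closure {x : P | x ∈ C ∧ x ^ p ^ k = 1}

/-- `C` is a Thompson critical subgroup of the `p`-group `P`: a characteristic subgroup
containing its centralizer in `P`, with `[P,C] ≤ Z(C)` and `C/Z(C)` elementary abelian. -/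
def IsThompsonCritical (p : ℕ) {P : Type*} [Group P] (C : Subgroup P) : Prop :=
  C.Characteristic ∧
  Subgroup.centralizer (C : Set P) ≤ C ∧
  ⁅(⊤ : Subgroup P), C⁆ ≤ C ⊓ Subgroup.centralizer (C : Set P) ∧
  ∀ x ∈ C, x ^ p ∈ C ⊓ Subgroup.centralizer (C : Set P)

open scoped commutatorElement

private lemma aux_yxn {H : Type*} [Group H] {x y c : H} (h : y * x = c * x * y)
    (hcx : Commute c x) : ∀ n : ℕ, y * x ^ n = c ^ n * x ^ n * y := by
  intro n
  induction n with
  | zero => simp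
  | succ n ih =>
    calc y * x ^ (n + 1) = y * x ^ n * x := by rw [pow_succ, ← mul_assoc]
      _ = c ^ n * x ^ n * y * x := by rw [ih]
      _ = c ^ n * x ^ n * (y * x) := by rw [mul_assoc]
      _ = c ^ n * x ^ n * (c * x * y) := by rw [h]
      _ = c ^ n * (x ^ n * c) * (x * y) := by simp only [mul_assoc]
      _ = c ^ n * (c * x ^ n) * (x * y) := by rw [← (hcx.pow_right n).eq]
      _ = c ^ (n + 1) * x ^ (n + 1) * y := by
            rw [pow_succ c, pow_succ x]; simp only [mul_assoc]

private lemma aux_ynx {H : Type*} [Group H] {x y c : H} (h : y * x = c * x * y)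
    (hcy : Commute c y) : ∀ n : ℕ, y ^ n * x = c ^ n * x * y ^ n := by
  intro n
  induction n with
  | zero => simp
  | succ n ih =>
    calc y ^ (n + 1) * x = y * (y ^ n * x) := by rw [pow_succ', mul_assoc]
      _ = y * (c ^ n * x * y ^ n) := by rw [ih]
      _ = (y * c ^ n) * (x * y ^ n) := by simp only [mul_assoc]
      _ = (c ^ n * y) * (x * y ^ n) := by rw [(hcy.pow_left n).eq]
      _ = c ^ n * (y * x) * y ^ n := by simp only [mul_assoc]
      _ = c ^ n * (c * x * y) * y ^ n := by rw [h]
      _ = c ^ (n + 1) * x * y ^ (n + 1) := by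
            rw [pow_succ c, pow_succ' y]; simp only [mul_assoc]

private lemma aux_mulpow {H : Type*} [Group H] {x y c : H} (h : y * x = c * x * y)
    (hcx : Commute c x) (hcy : Commute c y) :
    ∀ n : ℕ, (x * y) ^ n = c ^ n.choose 2 * x ^ n * y ^ n := by
  intro n
  induction n with
  | zero => simp
  | succ n ih =>
    have hch : (n + 1).choose 2 = n.choose 2 + n := by
      rw [Nat.choose_succ_succ, Nat.choose_one_right, Nat.add_comm]
    calc (x * y) ^ (n + 1) = (x * y) ^ n * (x * y) := pow_succ _ n
      _ = c ^ n.choose 2 * x ^ n * y ^ n * (x * y) := by rw [ih]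
      _ = c ^ n.choose 2 * (x ^ n * ((y ^ n * x) * y)) := by simp only [mul_assoc]
      _ = c ^ n.choose 2 * (x ^ n * ((c ^ n * x * y ^ n) * y)) := by rw [aux_ynx h hcy n]
      _ = c ^ n.choose 2 * ((x ^ n * c ^ n) * (x * (y ^ n * y))) := by simp only [mul_assoc]
      _ = c ^ n.choose 2 * ((c ^ n * x ^ n) * (x * (y ^ n * y))) := by
            rw [← ((hcx.pow_right n).pow_left n).eq]
      _ = c ^ (n + 1).choose 2 * x ^ (n + 1) * y ^ (n + 1) := by
            rw [hch, pow_add, pow_succ x, pow_succ y]; simp only [mul_assoc]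

/-- Key lemma: if every `p`-th power of an element of `C` centralizes `C` and every
commutator of two elements of `C` centralizes `C`, and `p ∣ (p^k).choose 2`, then every
element of `omegaK p k C` has order dividing `p^k`. -/
private lemma omega_exponent {H : Type*} [Group H] (p k : ℕ) (C : Subgroup H)
    (hcent : ∀ x ∈ C, x ^ p ∈ Subgroup.centralizer (C : Set H))
    (hcomm : ∀ x ∈ C, ∀ y ∈ C, ⁅y, x⁆ ∈ Subgroup.centralizer (C : Set H))
    (hdvd : p ∣ (p ^ k).choose 2) :
    ∀ x ∈ omegaK p k C, x ^ p ^ k = 1 := by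
  have main : ∀ x ∈ omegaK p k C, x ∈ C ∧ x ^ p ^ k = 1 := by
    intro x hx
    induction hx using Subgroup.closure_induction with
    | mem z hz => exact hz
    | one => exact ⟨one_mem C, one_pow _⟩
    | mul a b _ _ ha hb =>
      obtain ⟨haC, ha1⟩ := ha
      obtain ⟨hbC, hb1⟩ := hb
      refine ⟨mul_mem haC hbC, ?_⟩
      set c : H := ⁅b, a⁆ with hc
      have hcC : c ∈ Subgroup.centralizer (C : Set H) := hcomm a haC b hbC
      have h : b * a = c * a * b := by
        rw [hc, commutatorElement_def]; group
      have hca : Commute c a := ((Subgroup.mem_centralizer_iff.mp hcC) a haC).symm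
      have hcb : Commute c b := ((Subgroup.mem_centralizer_iff.mp hcC) b hbC).symm
      have hcp : c ^ p = 1 := by
        have h1 : b * a ^ p = c ^ p * a ^ p * b := aux_yxn h hca p
        have h2 : b * a ^ p = a ^ p * b :=
          (Subgroup.mem_centralizer_iff.mp (hcent a haC)) b hbC
        have h3 : c ^ p * (a ^ p * b) = a ^ p * b := by rw [← mul_assoc, ← h1, h2]
        exact right_eq_mul.mp h3.symm
      obtain ⟨t, ht⟩ := hdvd
      rw [aux_mulpow h hca hcb, ha1, hb1, ht, pow_mul, hcp, one_pow, mul_one, mul_one]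
    | inv a _ ha =>
      obtain ⟨haC, ha1⟩ := ha
      exact ⟨inv_mem haC, by rw [inv_pow, ha1, inv_one]⟩
  exact fun x hx => (main x hx).2

/-- if `p` is odd then `Ω₁(C)` has exponent `p`; if `P` is a nonabelian
2-group then `Ω₂(C)` has exponent `4`. -/
theorem stmt_5 {G : Type*} [Group G] [Finite G] (p : ℕ) (hp : p.Prime)
    (P : Subgroup G) (hPnorm : P.Normal) (hPp : IsPGroup p P)
    (C : Subgroup ↥P) (hC : IsThompsonCritical p C) :
    (Odd p → ∀ x ∈ omegaK p 1 C, x ^ p = 1) ∧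
    (p = 2 → ¬(∀ x y : ↥P, x * y = y * x) → ∀ x ∈ omegaK p 2 C, x ^ 4 = 1) := by
  obtain ⟨_, _, hcomm', hcent'⟩ := hC
  have hcent : ∀ x ∈ C, x ^ p ∈ Subgroup.centralizer (C : Set ↥P) :=
    fun x hx => (hcent' x hx).2
  have hcomm : ∀ x ∈ C, ∀ y ∈ C, ⁅y, x⁆ ∈ Subgroup.centralizer (C : Set ↥P) := by
    intro x hx y _
    exact (hcomm' (Subgroup.commutator_mem_commutator (Subgroup.mem_top y) hx)).2
  constructor
  · intro hodd x hx
    have hdvd : p ∣ (p ^ 1).choose 2 := by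
      rw [pow_one, Nat.choose_two_right]
      obtain ⟨m, hm⟩ := hodd
      have h2 : (2 : ℕ) ∣ p - 1 := ⟨m, by omega⟩
      exact ⟨(p - 1) / 2, Nat.mul_div_assoc p h2⟩
    have := omega_exponent p 1 C hcent hcomm hdvd x hx
    rwa [pow_one] at this
  · intro hp2 _ x hx
    subst hp2
    have hdvd : (2 : ℕ) ∣ (2 ^ 2).choose 2 := by decide
    exact omega_exponent 2 2 C hcent hcomm hdvd x hx
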